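/- Let (α*, γ*) be the unique pair in (1,∞) × (1,∞) satisfying γ*·f(γ*) + (1/α*)·f(1/α*) = 1 and f(γ*) + f(1/α*) = 1, where f(y) = y·e^{1−y}. Then 7.5 < α*·γ* < 8.5. -/

import Mathlib

set_option maxHeartbeats 1600000

/-- The function `f(y) = y · e^{1-y}` from the large-deviations lower bound. -/
noncomputable def fLD (y : ℝ) : ℝ := y * Real.exp (1 - y)

/-- Auxiliary: `u(y) = y² · e^{1-y}`. -/
noncomputable def uLD (y : ℝ) : ℝ := y ^ 2 * Real.exp (1 - y)

lemma exp_lt_of' (k n : ℕ) (q c : ℝ) (hq : q * n = k) (hc : 0 < c)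
    (h : (2.7182818286:ℝ) ^ k < c ^ n) : Real.exp q < c := by
  have e1 : Real.exp 1 < 2.7182818286 := Real.exp_one_lt_d9
  have key : Real.exp q ^ n = Real.exp 1 ^ k := by
    rw [← Real.exp_nat_mul, ← Real.exp_nat_mul, mul_comm, hq, mul_one]
  have h2 : Real.exp 1 ^ k < c ^ n :=
    lt_of_le_of_lt (pow_le_pow_left₀ (Real.exp_pos 1).le e1.le k) h
  exact lt_of_pow_lt_pow_left₀ n hc.le (key ▸ h2)

lemma lt_exp_of' (k n : ℕ) (q c : ℝ) (hq : q * n = k)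
    (h : c ^ n < (2.7182818283:ℝ) ^ k) : c < Real.exp q := by
  have e1 : (2.7182818283:ℝ) < Real.exp 1 := Real.exp_one_gt_d9
  have key : Real.exp q ^ n = Real.exp 1 ^ k := by
    rw [← Real.exp_nat_mul, ← Real.exp_nat_mul, mul_comm, hq, mul_one]
  have h2 : c ^ n < Real.exp q ^ n := by
    rw [key]; exact lt_of_lt_of_le h (pow_le_pow_left₀ (by norm_num) e1.le k)
  exact lt_of_pow_lt_pow_left₀ n (Real.exp_pos _).le h2

lemma pow4_lt {a b : ℝ} {k n : ℕ}
    (h : (a ^ (k / 4)) ^ 4 * a ^ (k % 4) < (b ^ (n / 4)) ^ 4 * b ^ (n % 4)) : a ^ k < b ^ n := by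
  rwa [← pow_mul, ← pow_add, Nat.div_add_mod', ← pow_mul, ← pow_add, Nat.div_add_mod'] at h

lemma fLD_hasDeriv (y : ℝ) : HasDerivAt fLD ((1 - y) * Real.exp (1 - y)) y := by
  have h1 : HasDerivAt (fun y : ℝ => 1 - y) (-1) y := by
    exact (hasDerivAt_id' y).const_sub (1:ℝ)
  have h2 : HasDerivAt (fun y : ℝ => Real.exp (1 - y)) (Real.exp (1 - y) * (-1)) y :=
    (Real.hasDerivAt_exp (1 - y)).comp y h1
  have h3 := (hasDerivAt_id y).mul h2
  refine h3.congr_deriv ?_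
  simp only [id]
  ring

lemma uLD_hasDeriv (y : ℝ) : HasDerivAt uLD ((2 * y - y ^ 2) * Real.exp (1 - y)) y := by
  have h1 : HasDerivAt (fun y : ℝ => 1 - y) (-1) y := by
    exact (hasDerivAt_id' y).const_sub (1:ℝ)
  have h2 : HasDerivAt (fun y : ℝ => Real.exp (1 - y)) (Real.exp (1 - y) * (-1)) y :=
    (Real.hasDerivAt_exp (1 - y)).comp y h1
  have h3 := ((hasDerivAt_pow 2 y)).mul h2
  refine h3.congr_deriv ?_
  norm_num
  ring

lemma fLD_anti : StrictAntiOn fLD (Set.Ici 1) := by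
  apply strictAntiOn_of_deriv_neg (convex_Ici 1)
  · exact Continuous.continuousOn (by unfold fLD; continuity)
  · intro y hy
    rw [interior_Ici] at hy
    rw [(fLD_hasDeriv y).deriv]
    have : (0:ℝ) < Real.exp (1 - y) := Real.exp_pos _
    nlinarith [hy.out]

lemma fLD_mono : StrictMonoOn fLD (Set.Icc 0 1) := by
  apply strictMonoOn_of_deriv_pos (convex_Icc 0 1)
  · exact Continuous.continuousOn (by unfold fLD; continuity)
  · intro y hy
    rw [interior_Icc] at hy
    rw [(fLD_hasDeriv y).deriv]
    have : (0:ℝ) < Real.exp (1 - y) := Real.exp_pos _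
    nlinarith [hy.1, hy.2]

lemma uLD_anti : StrictAntiOn uLD (Set.Ici 2) := by
  apply strictAntiOn_of_deriv_neg (convex_Ici 2)
  · exact Continuous.continuousOn (by unfold uLD; continuity)
  · intro y hy
    rw [interior_Ici] at hy
    rw [(uLD_hasDeriv y).deriv]
    have h : (0:ℝ) < Real.exp (1 - y) := Real.exp_pos _
    have hneg : 2 * y - y ^ 2 < 0 := by nlinarith [hy.out]
    exact mul_neg_of_neg_of_pos hneg h

lemma uLD_mono : StrictMonoOn uLD (Set.Icc 0 2) := by
  apply strictMonoOn_of_deriv_pos (convex_Icc 0 2)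
  · exact Continuous.continuousOn (by unfold uLD; continuity)
  · intro y hy
    rw [interior_Icc] at hy
    rw [(uLD_hasDeriv y).deriv]
    have h : (0:ℝ) < Real.exp (1 - y) := Real.exp_pos _
    have hpos : 0 < 2 * y - y ^ 2 := by nlinarith [hy.1, hy.2]
    exact mul_pos hpos h

lemma fact_u35 : 1 < uLD 3.5 := by
  have eb : Real.exp ((3.5:ℝ) - 1) < 12.182494 :=
    exp_lt_of' 5 2 _ _ (by norm_num) (by norm_num) (by norm_num)
  have hp : (0:ℝ) < Real.exp ((3.5:ℝ) - 1) := Real.exp_pos _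
  have hinv : ((12.182494:ℝ))⁻¹ < (Real.exp ((3.5:ℝ) - 1))⁻¹ :=
    inv_strictAnti₀ hp eb
  have hBe : uLD (3.5:ℝ) = 3.5 ^ 2 * (Real.exp ((3.5:ℝ) - 1))⁻¹ := by
    unfold uLD
    rw [show ((1:ℝ) - 3.5) = -(3.5 - 1) by ring, Real.exp_neg]
  rw [hBe]
  nlinarith [hinv, hp]

lemma fact_f_lt_0 : fLD 0.385 + fLD 3.5 < 1 := by
  have ea : Real.exp ((1:ℝ) - 0.385) < 1.849657 :=
    exp_lt_of' 123 200 _ _ (by norm_num) (by norm_num) (by norm_num)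
  have eb : (12.182493:ℝ) < Real.exp ((3.5:ℝ) - 1) :=
    lt_exp_of' 5 2 _ _ (by norm_num) (by norm_num)
  have hp : (0:ℝ) < Real.exp ((3.5:ℝ) - 1) := Real.exp_pos _
  have hinv : (Real.exp ((3.5:ℝ) - 1))⁻¹ < (12.182493:ℝ)⁻¹ :=
    inv_strictAnti₀ (by norm_num) eb
  have hBe : fLD (3.5:ℝ) = 3.5 * (Real.exp ((3.5:ℝ) - 1))⁻¹ := by
    unfold fLD
    rw [show ((1:ℝ) - 3.5) = -(3.5 - 1) by ring, Real.exp_neg]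
  have hAe : fLD (0.385:ℝ) = 0.385 * Real.exp ((1:ℝ) - 0.385) := rfl
  rw [hAe, hBe]
  nlinarith [ea, hinv, Real.exp_pos ((1:ℝ) - 0.385), hp]

lemma fact_f_gt_0 : 1 < fLD 0.825 + fLD 7 := by
  have ea : (1.191246:ℝ) < Real.exp ((1:ℝ) - 0.825) :=
    lt_exp_of' 7 40 _ _ (by norm_num) (by norm_num)
  have eb : Real.exp ((7:ℝ) - 1) < 403.428794 :=
    exp_lt_of' 6 1 _ _ (by norm_num) (by norm_num) (by norm_num)
  have hp : (0:ℝ) < Real.exp ((7:ℝ) - 1) := Real.exp_pos _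
  have hinv : ((403.428794:ℝ))⁻¹ < (Real.exp ((7:ℝ) - 1))⁻¹ :=
    inv_strictAnti₀ hp eb
  have hBe : fLD (7:ℝ) = 7 * (Real.exp ((7:ℝ) - 1))⁻¹ := by
    unfold fLD
    rw [show ((1:ℝ) - 7) = -(7 - 1) by ring, Real.exp_neg]
  have hAe : fLD (0.825:ℝ) = 0.825 * Real.exp ((1:ℝ) - 0.825) := rfl
  rw [hAe, hBe]
  nlinarith [ea, hinv, Real.exp_pos ((1:ℝ) - 0.825), hp]

lemma fact_u_gt_0 : 1 < uLD 0.385 + uLD 4.18 := by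
  have ea : (1.849656:ℝ) < Real.exp ((1:ℝ) - 0.385) :=
    lt_exp_of' 123 200 _ _ (by norm_num) (by norm_num)
  have eb : Real.exp ((4.18:ℝ) - 1) < 24.046754 :=
    exp_lt_of' 159 50 _ _ (by norm_num) (by norm_num) (by norm_num)
  have hp : (0:ℝ) < Real.exp ((4.18:ℝ) - 1) := Real.exp_pos _
  have hinv : ((24.046754:ℝ))⁻¹ < (Real.exp ((4.18:ℝ) - 1))⁻¹ :=
    inv_strictAnti₀ hp eb
  have hBe : uLD (4.18:ℝ) = 4.18 ^ 2 * (Real.exp ((4.18:ℝ) - 1))⁻¹ := by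
    unfold uLD
    rw [show ((1:ℝ) - 4.18) = -(4.18 - 1) by ring, Real.exp_neg]
  have hAe : uLD (0.385:ℝ) = 0.385 ^ 2 * Real.exp ((1:ℝ) - 0.385) := rfl
  rw [hAe, hBe]
  nlinarith [ea, hinv, Real.exp_pos ((1:ℝ) - 0.385), hp]

lemma fact_u_lt_0 : uLD 0.825 + uLD 6.37 < 1 := by
  have ea : Real.exp ((1:ℝ) - 0.825) < 1.191247 :=
    exp_lt_of' 7 40 _ _ (by norm_num) (by norm_num) (by norm_num)
  have eb : (214.862867:ℝ) < Real.exp ((6.37:ℝ) - 1) :=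
    lt_exp_of' 537 100 _ _ (by norm_num) (pow4_lt (by norm_num))
  have hp : (0:ℝ) < Real.exp ((6.37:ℝ) - 1) := Real.exp_pos _
  have hinv : (Real.exp ((6.37:ℝ) - 1))⁻¹ < (214.862867:ℝ)⁻¹ :=
    inv_strictAnti₀ (by norm_num) eb
  have hBe : uLD (6.37:ℝ) = 6.37 ^ 2 * (Real.exp ((6.37:ℝ) - 1))⁻¹ := by
    unfold uLD
    rw [show ((1:ℝ) - 6.37) = -(6.37 - 1) by ring, Real.exp_neg]
  have hAe : uLD (0.825:ℝ) = 0.825 ^ 2 * Real.exp ((1:ℝ) - 0.825) := rfl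
  rw [hAe, hBe]
  nlinarith [ea, hinv, Real.exp_pos ((1:ℝ) - 0.825), hp]

lemma fact_f_lt_1 : fLD 0.502 + fLD 4.18 < 1 := by
  have ea : Real.exp ((1:ℝ) - 0.502) < 1.645428 :=
    exp_lt_of' 249 500 _ _ (by norm_num) (by norm_num) (pow4_lt (by norm_num))
  have eb : (24.046753:ℝ) < Real.exp ((4.18:ℝ) - 1) :=
    lt_exp_of' 159 50 _ _ (by norm_num) (by norm_num)
  have hp : (0:ℝ) < Real.exp ((4.18:ℝ) - 1) := Real.exp_pos _
  have hinv : (Real.exp ((4.18:ℝ) - 1))⁻¹ < (24.046753:ℝ)⁻¹ :=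
    inv_strictAnti₀ (by norm_num) eb
  have hBe : fLD (4.18:ℝ) = 4.18 * (Real.exp ((4.18:ℝ) - 1))⁻¹ := by
    unfold fLD
    rw [show ((1:ℝ) - 4.18) = -(4.18 - 1) by ring, Real.exp_neg]
  have hAe : fLD (0.502:ℝ) = 0.502 * Real.exp ((1:ℝ) - 0.502) := rfl
  rw [hAe, hBe]
  nlinarith [ea, hinv, Real.exp_pos ((1:ℝ) - 0.502), hp]

lemma fact_f_gt_1 : 1 < fLD 0.775 + fLD 6.37 := by
  have ea : (1.252322:ℝ) < Real.exp ((1:ℝ) - 0.775) :=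
    lt_exp_of' 9 40 _ _ (by norm_num) (by norm_num)
  have eb : Real.exp ((6.37:ℝ) - 1) < 214.862868 :=
    exp_lt_of' 537 100 _ _ (by norm_num) (by norm_num) (pow4_lt (by norm_num))
  have hp : (0:ℝ) < Real.exp ((6.37:ℝ) - 1) := Real.exp_pos _
  have hinv : ((214.862868:ℝ))⁻¹ < (Real.exp ((6.37:ℝ) - 1))⁻¹ :=
    inv_strictAnti₀ hp eb
  have hBe : fLD (6.37:ℝ) = 6.37 * (Real.exp ((6.37:ℝ) - 1))⁻¹ := by
    unfold fLD
    rw [show ((1:ℝ) - 6.37) = -(6.37 - 1) by ring, Real.exp_neg]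
  have hAe : fLD (0.775:ℝ) = 0.775 * Real.exp ((1:ℝ) - 0.775) := rfl
  rw [hAe, hBe]
  nlinarith [ea, hinv, Real.exp_pos ((1:ℝ) - 0.775), hp]

lemma fact_u_gt_1 : 1 < uLD 0.502 + uLD 4.57 := by
  have ea : (1.645427:ℝ) < Real.exp ((1:ℝ) - 0.502) :=
    lt_exp_of' 249 500 _ _ (by norm_num) (pow4_lt (by norm_num))
  have eb : Real.exp ((4.57:ℝ) - 1) < 35.516594 :=
    exp_lt_of' 357 100 _ _ (by norm_num) (by norm_num) (pow4_lt (by norm_num))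
  have hp : (0:ℝ) < Real.exp ((4.57:ℝ) - 1) := Real.exp_pos _
  have hinv : ((35.516594:ℝ))⁻¹ < (Real.exp ((4.57:ℝ) - 1))⁻¹ :=
    inv_strictAnti₀ hp eb
  have hBe : uLD (4.57:ℝ) = 4.57 ^ 2 * (Real.exp ((4.57:ℝ) - 1))⁻¹ := by
    unfold uLD
    rw [show ((1:ℝ) - 4.57) = -(4.57 - 1) by ring, Real.exp_neg]
  have hAe : uLD (0.502:ℝ) = 0.502 ^ 2 * Real.exp ((1:ℝ) - 0.502) := rfl
  rw [hAe, hBe]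
  nlinarith [ea, hinv, Real.exp_pos ((1:ℝ) - 0.502), hp]

lemma fact_u_lt_1 : uLD 0.775 + uLD 5.97 < 1 := by
  have ea : Real.exp ((1:ℝ) - 0.775) < 1.252323 :=
    exp_lt_of' 9 40 _ _ (by norm_num) (by norm_num) (by norm_num)
  have eb : (144.026887:ℝ) < Real.exp ((5.97:ℝ) - 1) :=
    lt_exp_of' 497 100 _ _ (by norm_num) (pow4_lt (by norm_num))
  have hp : (0:ℝ) < Real.exp ((5.97:ℝ) - 1) := Real.exp_pos _
  have hinv : (Real.exp ((5.97:ℝ) - 1))⁻¹ < (144.026887:ℝ)⁻¹ :=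
    inv_strictAnti₀ (by norm_num) eb
  have hBe : uLD (5.97:ℝ) = 5.97 ^ 2 * (Real.exp ((5.97:ℝ) - 1))⁻¹ := by
    unfold uLD
    rw [show ((1:ℝ) - 5.97) = -(5.97 - 1) by ring, Real.exp_neg]
  have hAe : uLD (0.775:ℝ) = 0.775 ^ 2 * Real.exp ((1:ℝ) - 0.775) := rfl
  rw [hAe, hBe]
  nlinarith [ea, hinv, Real.exp_pos ((1:ℝ) - 0.775), hp]

lemma fact_f_lt_2 : fLD 0.562 + fLD 4.57 < 1 := by
  have ea : Real.exp ((1:ℝ) - 0.562) < 1.549605 :=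
    exp_lt_of' 219 500 _ _ (by norm_num) (by norm_num) (pow4_lt (by norm_num))
  have eb : (35.516593:ℝ) < Real.exp ((4.57:ℝ) - 1) :=
    lt_exp_of' 357 100 _ _ (by norm_num) (pow4_lt (by norm_num))
  have hp : (0:ℝ) < Real.exp ((4.57:ℝ) - 1) := Real.exp_pos _
  have hinv : (Real.exp ((4.57:ℝ) - 1))⁻¹ < (35.516593:ℝ)⁻¹ :=
    inv_strictAnti₀ (by norm_num) eb
  have hBe : fLD (4.57:ℝ) = 4.57 * (Real.exp ((4.57:ℝ) - 1))⁻¹ := by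
    unfold fLD
    rw [show ((1:ℝ) - 4.57) = -(4.57 - 1) by ring, Real.exp_neg]
  have hAe : fLD (0.562:ℝ) = 0.562 * Real.exp ((1:ℝ) - 0.562) := rfl
  rw [hAe, hBe]
  nlinarith [ea, hinv, Real.exp_pos ((1:ℝ) - 0.562), hp]

lemma fact_f_gt_2 : 1 < fLD 0.737 + fLD 5.97 := by
  have ea : (1.300826:ℝ) < Real.exp ((1:ℝ) - 0.737) :=
    lt_exp_of' 263 1000 _ _ (by norm_num) (pow4_lt (by norm_num))
  have eb : Real.exp ((5.97:ℝ) - 1) < 144.026888 :=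
    exp_lt_of' 497 100 _ _ (by norm_num) (by norm_num) (pow4_lt (by norm_num))
  have hp : (0:ℝ) < Real.exp ((5.97:ℝ) - 1) := Real.exp_pos _
  have hinv : ((144.026888:ℝ))⁻¹ < (Real.exp ((5.97:ℝ) - 1))⁻¹ :=
    inv_strictAnti₀ hp eb
  have hBe : fLD (5.97:ℝ) = 5.97 * (Real.exp ((5.97:ℝ) - 1))⁻¹ := by
    unfold fLD
    rw [show ((1:ℝ) - 5.97) = -(5.97 - 1) by ring, Real.exp_neg]
  have hAe : fLD (0.737:ℝ) = 0.737 * Real.exp ((1:ℝ) - 0.737) := rfl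
  rw [hAe, hBe]
  nlinarith [ea, hinv, Real.exp_pos ((1:ℝ) - 0.737), hp]

lemma fact_u_gt_2 : 1 < uLD 0.562 + uLD 4.81 := by
  have ea : (1.549604:ℝ) < Real.exp ((1:ℝ) - 0.562) :=
    lt_exp_of' 219 500 _ _ (by norm_num) (pow4_lt (by norm_num))
  have eb : Real.exp ((4.81:ℝ) - 1) < 45.150439 :=
    exp_lt_of' 381 100 _ _ (by norm_num) (by norm_num) (pow4_lt (by norm_num))
  have hp : (0:ℝ) < Real.exp ((4.81:ℝ) - 1) := Real.exp_pos _
  have hinv : ((45.150439:ℝ))⁻¹ < (Real.exp ((4.81:ℝ) - 1))⁻¹ :=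
    inv_strictAnti₀ hp eb
  have hBe : uLD (4.81:ℝ) = 4.81 ^ 2 * (Real.exp ((4.81:ℝ) - 1))⁻¹ := by
    unfold uLD
    rw [show ((1:ℝ) - 4.81) = -(4.81 - 1) by ring, Real.exp_neg]
  have hAe : uLD (0.562:ℝ) = 0.562 ^ 2 * Real.exp ((1:ℝ) - 0.562) := rfl
  rw [hAe, hBe]
  nlinarith [ea, hinv, Real.exp_pos ((1:ℝ) - 0.562), hp]

lemma fact_u_lt_2 : uLD 0.737 + uLD 5.72 < 1 := by
  have ea : Real.exp ((1:ℝ) - 0.737) < 1.300827 :=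
    exp_lt_of' 263 1000 _ _ (by norm_num) (by norm_num) (pow4_lt (by norm_num))
  have eb : (112.168252:ℝ) < Real.exp ((5.72:ℝ) - 1) :=
    lt_exp_of' 118 25 _ _ (by norm_num) (by norm_num)
  have hp : (0:ℝ) < Real.exp ((5.72:ℝ) - 1) := Real.exp_pos _
  have hinv : (Real.exp ((5.72:ℝ) - 1))⁻¹ < (112.168252:ℝ)⁻¹ :=
    inv_strictAnti₀ (by norm_num) eb
  have hBe : uLD (5.72:ℝ) = 5.72 ^ 2 * (Real.exp ((5.72:ℝ) - 1))⁻¹ := by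
    unfold uLD
    rw [show ((1:ℝ) - 5.72) = -(5.72 - 1) by ring, Real.exp_neg]
  have hAe : uLD (0.737:ℝ) = 0.737 ^ 2 * Real.exp ((1:ℝ) - 0.737) := rfl
  rw [hAe, hBe]
  nlinarith [ea, hinv, Real.exp_pos ((1:ℝ) - 0.737), hp]

lemma fact_f_lt_3 : fLD 0.597 + fLD 4.81 < 1 := by
  have ea : Real.exp ((1:ℝ) - 0.597) < 1.496307 :=
    exp_lt_of' 403 1000 _ _ (by norm_num) (by norm_num) (pow4_lt (by norm_num))
  have eb : (45.150438:ℝ) < Real.exp ((4.81:ℝ) - 1) :=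
    lt_exp_of' 381 100 _ _ (by norm_num) (pow4_lt (by norm_num))
  have hp : (0:ℝ) < Real.exp ((4.81:ℝ) - 1) := Real.exp_pos _
  have hinv : (Real.exp ((4.81:ℝ) - 1))⁻¹ < (45.150438:ℝ)⁻¹ :=
    inv_strictAnti₀ (by norm_num) eb
  have hBe : fLD (4.81:ℝ) = 4.81 * (Real.exp ((4.81:ℝ) - 1))⁻¹ := by
    unfold fLD
    rw [show ((1:ℝ) - 4.81) = -(4.81 - 1) by ring, Real.exp_neg]
  have hAe : fLD (0.597:ℝ) = 0.597 * Real.exp ((1:ℝ) - 0.597) := rfl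
  rw [hAe, hBe]
  nlinarith [ea, hinv, Real.exp_pos ((1:ℝ) - 0.597), hp]

lemma fact_f_gt_3 : 1 < fLD 0.711 + fLD 5.72 := by
  have ea : (1.335091:ℝ) < Real.exp ((1:ℝ) - 0.711) :=
    lt_exp_of' 289 1000 _ _ (by norm_num) (pow4_lt (by norm_num))
  have eb : Real.exp ((5.72:ℝ) - 1) < 112.168253 :=
    exp_lt_of' 118 25 _ _ (by norm_num) (by norm_num) (by norm_num)
  have hp : (0:ℝ) < Real.exp ((5.72:ℝ) - 1) := Real.exp_pos _
  have hinv : ((112.168253:ℝ))⁻¹ < (Real.exp ((5.72:ℝ) - 1))⁻¹ :=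
    inv_strictAnti₀ hp eb
  have hBe : fLD (5.72:ℝ) = 5.72 * (Real.exp ((5.72:ℝ) - 1))⁻¹ := by
    unfold fLD
    rw [show ((1:ℝ) - 5.72) = -(5.72 - 1) by ring, Real.exp_neg]
  have hAe : fLD (0.711:ℝ) = 0.711 * Real.exp ((1:ℝ) - 0.711) := rfl
  rw [hAe, hBe]
  nlinarith [ea, hinv, Real.exp_pos ((1:ℝ) - 0.711), hp]

lemma fact_u_gt_3 : 1 < uLD 0.597 + uLD 4.96 := by
  have ea : (1.496306:ℝ) < Real.exp ((1:ℝ) - 0.597) :=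
    lt_exp_of' 403 1000 _ _ (by norm_num) (pow4_lt (by norm_num))
  have eb : Real.exp ((4.96:ℝ) - 1) < 52.457327 :=
    exp_lt_of' 99 25 _ _ (by norm_num) (by norm_num) (by norm_num)
  have hp : (0:ℝ) < Real.exp ((4.96:ℝ) - 1) := Real.exp_pos _
  have hinv : ((52.457327:ℝ))⁻¹ < (Real.exp ((4.96:ℝ) - 1))⁻¹ :=
    inv_strictAnti₀ hp eb
  have hBe : uLD (4.96:ℝ) = 4.96 ^ 2 * (Real.exp ((4.96:ℝ) - 1))⁻¹ := by
    unfold uLD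
    rw [show ((1:ℝ) - 4.96) = -(4.96 - 1) by ring, Real.exp_neg]
  have hAe : uLD (0.597:ℝ) = 0.597 ^ 2 * Real.exp ((1:ℝ) - 0.597) := rfl
  rw [hAe, hBe]
  nlinarith [ea, hinv, Real.exp_pos ((1:ℝ) - 0.597), hp]

lemma fact_u_lt_3 : uLD 0.711 + uLD 5.56 < 1 := by
  have ea : Real.exp ((1:ℝ) - 0.711) < 1.335092 :=
    exp_lt_of' 289 1000 _ _ (by norm_num) (by norm_num) (pow4_lt (by norm_num))
  have eb : (95.583479:ℝ) < Real.exp ((5.56:ℝ) - 1) :=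
    lt_exp_of' 114 25 _ _ (by norm_num) (by norm_num)
  have hp : (0:ℝ) < Real.exp ((5.56:ℝ) - 1) := Real.exp_pos _
  have hinv : (Real.exp ((5.56:ℝ) - 1))⁻¹ < (95.583479:ℝ)⁻¹ :=
    inv_strictAnti₀ (by norm_num) eb
  have hBe : uLD (5.56:ℝ) = 5.56 ^ 2 * (Real.exp ((5.56:ℝ) - 1))⁻¹ := by
    unfold uLD
    rw [show ((1:ℝ) - 5.56) = -(5.56 - 1) by ring, Real.exp_neg]
  have hAe : uLD (0.711:ℝ) = 0.711 ^ 2 * Real.exp ((1:ℝ) - 0.711) := rfl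
  rw [hAe, hBe]
  nlinarith [ea, hinv, Real.exp_pos ((1:ℝ) - 0.711), hp]

lemma fact_f_lt_4 : fLD 0.617 + fLD 4.96 < 1 := by
  have ea : Real.exp ((1:ℝ) - 0.617) < 1.466679 :=
    exp_lt_of' 383 1000 _ _ (by norm_num) (by norm_num) (pow4_lt (by norm_num))
  have eb : (52.457325:ℝ) < Real.exp ((4.96:ℝ) - 1) :=
    lt_exp_of' 99 25 _ _ (by norm_num) (by norm_num)
  have hp : (0:ℝ) < Real.exp ((4.96:ℝ) - 1) := Real.exp_pos _
  have hinv : (Real.exp ((4.96:ℝ) - 1))⁻¹ < (52.457325:ℝ)⁻¹ :=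
    inv_strictAnti₀ (by norm_num) eb
  have hBe : fLD (4.96:ℝ) = 4.96 * (Real.exp ((4.96:ℝ) - 1))⁻¹ := by
    unfold fLD
    rw [show ((1:ℝ) - 4.96) = -(4.96 - 1) by ring, Real.exp_neg]
  have hAe : fLD (0.617:ℝ) = 0.617 * Real.exp ((1:ℝ) - 0.617) := rfl
  rw [hAe, hBe]
  nlinarith [ea, hinv, Real.exp_pos ((1:ℝ) - 0.617), hp]

lemma fact_f_gt_4 : 1 < fLD 0.693 + fLD 5.56 := by
  have ea : (1.35934:ℝ) < Real.exp ((1:ℝ) - 0.693) :=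
    lt_exp_of' 307 1000 _ _ (by norm_num) (pow4_lt (by norm_num))
  have eb : Real.exp ((5.56:ℝ) - 1) < 95.58348 :=
    exp_lt_of' 114 25 _ _ (by norm_num) (by norm_num) (by norm_num)
  have hp : (0:ℝ) < Real.exp ((5.56:ℝ) - 1) := Real.exp_pos _
  have hinv : ((95.58348:ℝ))⁻¹ < (Real.exp ((5.56:ℝ) - 1))⁻¹ :=
    inv_strictAnti₀ hp eb
  have hBe : fLD (5.56:ℝ) = 5.56 * (Real.exp ((5.56:ℝ) - 1))⁻¹ := by
    unfold fLD
    rw [show ((1:ℝ) - 5.56) = -(5.56 - 1) by ring, Real.exp_neg]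
  have hAe : fLD (0.693:ℝ) = 0.693 * Real.exp ((1:ℝ) - 0.693) := rfl
  rw [hAe, hBe]
  nlinarith [ea, hinv, Real.exp_pos ((1:ℝ) - 0.693), hp]

lemma fact_u_gt_4 : 1 < uLD 0.617 + uLD 5.05 := by
  have ea : (1.466678:ℝ) < Real.exp ((1:ℝ) - 0.617) :=
    lt_exp_of' 383 1000 _ _ (by norm_num) (pow4_lt (by norm_num))
  have eb : Real.exp ((5.05:ℝ) - 1) < 57.397458 :=
    exp_lt_of' 81 20 _ _ (by norm_num) (by norm_num) (by norm_num)
  have hp : (0:ℝ) < Real.exp ((5.05:ℝ) - 1) := Real.exp_pos _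
  have hinv : ((57.397458:ℝ))⁻¹ < (Real.exp ((5.05:ℝ) - 1))⁻¹ :=
    inv_strictAnti₀ hp eb
  have hBe : uLD (5.05:ℝ) = 5.05 ^ 2 * (Real.exp ((5.05:ℝ) - 1))⁻¹ := by
    unfold uLD
    rw [show ((1:ℝ) - 5.05) = -(5.05 - 1) by ring, Real.exp_neg]
  have hAe : uLD (0.617:ℝ) = 0.617 ^ 2 * Real.exp ((1:ℝ) - 0.617) := rfl
  rw [hAe, hBe]
  nlinarith [ea, hinv, Real.exp_pos ((1:ℝ) - 0.617), hp]

lemma fact_u_lt_4 : uLD 0.693 + uLD 5.45 < 1 := by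
  have ea : Real.exp ((1:ℝ) - 0.693) < 1.359341 :=
    exp_lt_of' 307 1000 _ _ (by norm_num) (by norm_num) (pow4_lt (by norm_num))
  have eb : (85.626943:ℝ) < Real.exp ((5.45:ℝ) - 1) :=
    lt_exp_of' 89 20 _ _ (by norm_num) (by norm_num)
  have hp : (0:ℝ) < Real.exp ((5.45:ℝ) - 1) := Real.exp_pos _
  have hinv : (Real.exp ((5.45:ℝ) - 1))⁻¹ < (85.626943:ℝ)⁻¹ :=
    inv_strictAnti₀ (by norm_num) eb
  have hBe : uLD (5.45:ℝ) = 5.45 ^ 2 * (Real.exp ((5.45:ℝ) - 1))⁻¹ := by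
    unfold uLD
    rw [show ((1:ℝ) - 5.45) = -(5.45 - 1) by ring, Real.exp_neg]
  have hAe : uLD (0.693:ℝ) = 0.693 ^ 2 * Real.exp ((1:ℝ) - 0.693) := rfl
  rw [hAe, hBe]
  nlinarith [ea, hinv, Real.exp_pos ((1:ℝ) - 0.693), hp]

lemma fact_f_lt_5 : fLD 0.629 + fLD 5.05 < 1 := by
  have ea : Real.exp ((1:ℝ) - 0.629) < 1.449184 :=
    exp_lt_of' 371 1000 _ _ (by norm_num) (by norm_num) (pow4_lt (by norm_num))
  have eb : (57.397456:ℝ) < Real.exp ((5.05:ℝ) - 1) :=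
    lt_exp_of' 81 20 _ _ (by norm_num) (by norm_num)
  have hp : (0:ℝ) < Real.exp ((5.05:ℝ) - 1) := Real.exp_pos _
  have hinv : (Real.exp ((5.05:ℝ) - 1))⁻¹ < (57.397456:ℝ)⁻¹ :=
    inv_strictAnti₀ (by norm_num) eb
  have hBe : fLD (5.05:ℝ) = 5.05 * (Real.exp ((5.05:ℝ) - 1))⁻¹ := by
    unfold fLD
    rw [show ((1:ℝ) - 5.05) = -(5.05 - 1) by ring, Real.exp_neg]
  have hAe : fLD (0.629:ℝ) = 0.629 * Real.exp ((1:ℝ) - 0.629) := rfl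
  rw [hAe, hBe]
  nlinarith [ea, hinv, Real.exp_pos ((1:ℝ) - 0.629), hp]

lemma fact_f_gt_5 : 1 < fLD 0.68 + fLD 5.45 := by
  have ea : (1.377127:ℝ) < Real.exp ((1:ℝ) - 0.68) :=
    lt_exp_of' 8 25 _ _ (by norm_num) (by norm_num)
  have eb : Real.exp ((5.45:ℝ) - 1) < 85.626945 :=
    exp_lt_of' 89 20 _ _ (by norm_num) (by norm_num) (by norm_num)
  have hp : (0:ℝ) < Real.exp ((5.45:ℝ) - 1) := Real.exp_pos _
  have hinv : ((85.626945:ℝ))⁻¹ < (Real.exp ((5.45:ℝ) - 1))⁻¹ :=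
    inv_strictAnti₀ hp eb
  have hBe : fLD (5.45:ℝ) = 5.45 * (Real.exp ((5.45:ℝ) - 1))⁻¹ := by
    unfold fLD
    rw [show ((1:ℝ) - 5.45) = -(5.45 - 1) by ring, Real.exp_neg]
  have hAe : fLD (0.68:ℝ) = 0.68 * Real.exp ((1:ℝ) - 0.68) := rfl
  rw [hAe, hBe]
  nlinarith [ea, hinv, Real.exp_pos ((1:ℝ) - 0.68), hp]

lemma fact_u_gt_5 : 1 < uLD 0.629 + uLD 5.11 := by
  have ea : (1.449183:ℝ) < Real.exp ((1:ℝ) - 0.629) :=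
    lt_exp_of' 371 1000 _ _ (by norm_num) (pow4_lt (by norm_num))
  have eb : Real.exp ((5.11:ℝ) - 1) < 60.946718 :=
    exp_lt_of' 411 100 _ _ (by norm_num) (by norm_num) (pow4_lt (by norm_num))
  have hp : (0:ℝ) < Real.exp ((5.11:ℝ) - 1) := Real.exp_pos _
  have hinv : ((60.946718:ℝ))⁻¹ < (Real.exp ((5.11:ℝ) - 1))⁻¹ :=
    inv_strictAnti₀ hp eb
  have hBe : uLD (5.11:ℝ) = 5.11 ^ 2 * (Real.exp ((5.11:ℝ) - 1))⁻¹ := by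
    unfold uLD
    rw [show ((1:ℝ) - 5.11) = -(5.11 - 1) by ring, Real.exp_neg]
  have hAe : uLD (0.629:ℝ) = 0.629 ^ 2 * Real.exp ((1:ℝ) - 0.629) := rfl
  rw [hAe, hBe]
  nlinarith [ea, hinv, Real.exp_pos ((1:ℝ) - 0.629), hp]

lemma fact_u_lt_5 : uLD 0.68 + uLD 5.38 < 1 := by
  have ea : Real.exp ((1:ℝ) - 0.68) < 1.377128 :=
    exp_lt_of' 8 25 _ _ (by norm_num) (by norm_num) (by norm_num)
  have eb : (79.838033:ℝ) < Real.exp ((5.38:ℝ) - 1) :=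
    lt_exp_of' 219 50 _ _ (by norm_num) (by norm_num)
  have hp : (0:ℝ) < Real.exp ((5.38:ℝ) - 1) := Real.exp_pos _
  have hinv : (Real.exp ((5.38:ℝ) - 1))⁻¹ < (79.838033:ℝ)⁻¹ :=
    inv_strictAnti₀ (by norm_num) eb
  have hBe : uLD (5.38:ℝ) = 5.38 ^ 2 * (Real.exp ((5.38:ℝ) - 1))⁻¹ := by
    unfold uLD
    rw [show ((1:ℝ) - 5.38) = -(5.38 - 1) by ring, Real.exp_neg]
  have hAe : uLD (0.68:ℝ) = 0.68 ^ 2 * Real.exp ((1:ℝ) - 0.68) := rfl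
  rw [hAe, hBe]
  nlinarith [ea, hinv, Real.exp_pos ((1:ℝ) - 0.68), hp]

lemma fact_f_lt_6 : fLD 0.637 + fLD 5.11 < 1 := by
  have ea : Real.exp ((1:ℝ) - 0.637) < 1.437636 :=
    exp_lt_of' 363 1000 _ _ (by norm_num) (by norm_num) (pow4_lt (by norm_num))
  have eb : (60.946717:ℝ) < Real.exp ((5.11:ℝ) - 1) :=
    lt_exp_of' 411 100 _ _ (by norm_num) (pow4_lt (by norm_num))
  have hp : (0:ℝ) < Real.exp ((5.11:ℝ) - 1) := Real.exp_pos _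
  have hinv : (Real.exp ((5.11:ℝ) - 1))⁻¹ < (60.946717:ℝ)⁻¹ :=
    inv_strictAnti₀ (by norm_num) eb
  have hBe : fLD (5.11:ℝ) = 5.11 * (Real.exp ((5.11:ℝ) - 1))⁻¹ := by
    unfold fLD
    rw [show ((1:ℝ) - 5.11) = -(5.11 - 1) by ring, Real.exp_neg]
  have hAe : fLD (0.637:ℝ) = 0.637 * Real.exp ((1:ℝ) - 0.637) := rfl
  rw [hAe, hBe]
  nlinarith [ea, hinv, Real.exp_pos ((1:ℝ) - 0.637), hp]

lemma fact_f_gt_6 : 1 < fLD 0.672 + fLD 5.38 := by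
  have ea : (1.388188:ℝ) < Real.exp ((1:ℝ) - 0.672) :=
    lt_exp_of' 41 125 _ _ (by norm_num) (by norm_num)
  have eb : Real.exp ((5.38:ℝ) - 1) < 79.838034 :=
    exp_lt_of' 219 50 _ _ (by norm_num) (by norm_num) (by norm_num)
  have hp : (0:ℝ) < Real.exp ((5.38:ℝ) - 1) := Real.exp_pos _
  have hinv : ((79.838034:ℝ))⁻¹ < (Real.exp ((5.38:ℝ) - 1))⁻¹ :=
    inv_strictAnti₀ hp eb
  have hBe : fLD (5.38:ℝ) = 5.38 * (Real.exp ((5.38:ℝ) - 1))⁻¹ := by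
    unfold fLD
    rw [show ((1:ℝ) - 5.38) = -(5.38 - 1) by ring, Real.exp_neg]
  have hAe : fLD (0.672:ℝ) = 0.672 * Real.exp ((1:ℝ) - 0.672) := rfl
  rw [hAe, hBe]
  nlinarith [ea, hinv, Real.exp_pos ((1:ℝ) - 0.672), hp]

lemma fact_u_gt_6 : 1 < uLD 0.637 + uLD 5.15 := by
  have ea : (1.437635:ℝ) < Real.exp ((1:ℝ) - 0.637) :=
    lt_exp_of' 363 1000 _ _ (by norm_num) (pow4_lt (by norm_num))
  have eb : Real.exp ((5.15:ℝ) - 1) < 63.434001 :=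
    exp_lt_of' 83 20 _ _ (by norm_num) (by norm_num) (by norm_num)
  have hp : (0:ℝ) < Real.exp ((5.15:ℝ) - 1) := Real.exp_pos _
  have hinv : ((63.434001:ℝ))⁻¹ < (Real.exp ((5.15:ℝ) - 1))⁻¹ :=
    inv_strictAnti₀ hp eb
  have hBe : uLD (5.15:ℝ) = 5.15 ^ 2 * (Real.exp ((5.15:ℝ) - 1))⁻¹ := by
    unfold uLD
    rw [show ((1:ℝ) - 5.15) = -(5.15 - 1) by ring, Real.exp_neg]
  have hAe : uLD (0.637:ℝ) = 0.637 ^ 2 * Real.exp ((1:ℝ) - 0.637) := rfl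
  rw [hAe, hBe]
  nlinarith [ea, hinv, Real.exp_pos ((1:ℝ) - 0.637), hp]

lemma fact_u_lt_6 : uLD 0.672 + uLD 5.34 < 1 := by
  have ea : Real.exp ((1:ℝ) - 0.672) < 1.388189 :=
    exp_lt_of' 41 125 _ _ (by norm_num) (by norm_num) (by norm_num)
  have eb : (76.707539:ℝ) < Real.exp ((5.34:ℝ) - 1) :=
    lt_exp_of' 217 50 _ _ (by norm_num) (by norm_num)
  have hp : (0:ℝ) < Real.exp ((5.34:ℝ) - 1) := Real.exp_pos _
  have hinv : (Real.exp ((5.34:ℝ) - 1))⁻¹ < (76.707539:ℝ)⁻¹ :=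
    inv_strictAnti₀ (by norm_num) eb
  have hBe : uLD (5.34:ℝ) = 5.34 ^ 2 * (Real.exp ((5.34:ℝ) - 1))⁻¹ := by
    unfold uLD
    rw [show ((1:ℝ) - 5.34) = -(5.34 - 1) by ring, Real.exp_neg]
  have hAe : uLD (0.672:ℝ) = 0.672 ^ 2 * Real.exp ((1:ℝ) - 0.672) := rfl
  rw [hAe, hBe]
  nlinarith [ea, hinv, Real.exp_pos ((1:ℝ) - 0.672), hp]

theorem stmt_1 (α γ : ℝ) (hα : 1 < α) (hγ : 1 < γ)
    (h1 : γ * fLD γ + (1 / α) * fLD (1 / α) = 1)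
    (h2 : fLD γ + fLD (1 / α) = 1) :
    7.5 < α * γ ∧ α * γ < 8.5 := by
  set x : ℝ := 1 / α with hxdef
  have hα0 : (0:ℝ) < α := lt_trans zero_lt_one hα
  have hx0 : 0 < x := by rw [hxdef]; positivity
  have hx1 : x < 1 := by rw [hxdef, div_lt_one hα0]; linarith
  have hγmem1 : γ ∈ Set.Ici (1:ℝ) := Set.mem_Ici.mpr hγ.le
  have hxmem : x ∈ Set.Icc (0:ℝ) 1 := ⟨hx0.le, hx1.le⟩
  have hxmem2 : x ∈ Set.Icc (0:ℝ) 2 := ⟨hx0.le, by linarith⟩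
  have hu : uLD γ + uLD x = 1 := by
    have e1 : γ * fLD γ = uLD γ := by unfold fLD uLD; ring
    have e2 : x * fLD x = uLD x := by unfold fLD uLD; ring
    linarith only [h1, e1, e2]
  have hux_pos : 0 < uLD x := by
    have : (0:ℝ) < Real.exp (1 - x) := Real.exp_pos _
    unfold uLD; positivity
  have huγ_lt1 : uLD γ < 1 := by linarith only [hu, hux_pos]
  have hγ2 : 2 < γ := by
    by_contra hcon
    push_neg at hcon
    have h1m : (1:ℝ) ∈ Set.Icc (0:ℝ) 2 := by norm_num
    have hγm : γ ∈ Set.Icc (0:ℝ) 2 := ⟨by linarith, hcon⟩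
    have hlt := uLD_mono h1m hγm hγ
    have hu1 : uLD 1 = 1 := by unfold uLD; norm_num
    linarith only [hlt, hu1, huγ_lt1]
  have hγmem2 : γ ∈ Set.Ici (2:ℝ) := Set.mem_Ici.mpr hγ2.le
  have hgL0 : (3.5:ℝ) < γ := by
    by_contra hcon
    push_neg at hcon
    have h35 : uLD 3.5 ≤ uLD γ := by
      rcases eq_or_lt_of_le hcon with h | h
      · rw [h]
      · exact (uLD_anti hγmem2 (by norm_num) h).le
    linarith only [fact_u35, h35, huγ_lt1]
  have hgU0 : γ < 7 := by
    by_contra hcon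
    push_neg at hcon
    have e6 : (403:ℝ) < Real.exp 6 := by
      have h6 : Real.exp (6:ℝ) = Real.exp 1 ^ 6 := by
        rw [← Real.exp_nat_mul]; norm_num
      rw [h6]
      calc (403:ℝ) < 2.7182818283 ^ 6 := by norm_num
        _ ≤ Real.exp 1 ^ 6 := pow_le_pow_left₀ (by norm_num) Real.exp_one_gt_d9.le 6
    have hfγ7 : fLD γ ≤ fLD 7 := by
      rcases eq_or_lt_of_le hcon with h | h
      · rw [← h]
      · exact (fLD_anti (by norm_num) hγmem1 h).le
    have hf7 : fLD 7 < 0.0174 := by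
      have hp : (0:ℝ) < Real.exp 6 := Real.exp_pos _
      have hinv : (Real.exp (6:ℝ))⁻¹ < (403:ℝ)⁻¹ := inv_strictAnti₀ (by norm_num) e6
      have hBe : fLD (7:ℝ) = 7 * (Real.exp (6:ℝ))⁻¹ := by
        unfold fLD
        rw [show ((1:ℝ) - 7) = -(6:ℝ) by ring, Real.exp_neg]
      rw [hBe]
      nlinarith only [hinv, hp]
    set t := fLD γ with htdef
    have ht_pos : 0 < t := mul_pos (by linarith) (Real.exp_pos _)
    have hT : t < 0.0174 := lt_of_le_of_lt hfγ7 hf7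
    have hfx : fLD x = 1 - t := by linarith only [h2]
    have hxlow : 2 * x - x ^ 2 ≤ 1 - t := by
      have he : 2 - x ≤ Real.exp (1 - x) := by
        have := Real.add_one_le_exp (1 - x); linarith
      have hm := mul_le_mul_of_nonneg_left he hx0.le
      have : fLD x = x * Real.exp (1 - x) := rfl
      nlinarith only [hm, hfx, this, hx0]
    have ht_le : t ≤ (1 - x) ^ 2 := by nlinarith only [hxlow]
    set s := Real.sqrt t with hsdef
    have hs_sq : s ^ 2 = t := Real.sq_sqrt ht_pos.le
    have hs_pos : 0 < s := Real.sqrt_pos.mpr ht_pos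
    have hsx : s ≤ 1 - x := by
      rw [hsdef, show (1 - x:ℝ) = Real.sqrt ((1 - x) ^ 2) from (Real.sqrt_sq (by linarith)).symm]
      exact Real.sqrt_le_sqrt ht_le
    have hkey : 1 - t ≤ s * (γ - 1) := by
      have hx_le : x ≤ 1 - s := by linarith only [hsx]
      have h1' : γ * t + x * (1 - t) = 1 := by rw [← hfx]; linarith only [h1]
      have h1t : (0:ℝ) ≤ 1 - t := by nlinarith only [ht_le, hx0, hx1]
      have hxb : x * (1 - t) ≤ (1 - s) * (1 - t) :=
        mul_le_mul_of_nonneg_right hx_le h1t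
      have hst : s * t = s ^ 3 := by rw [← hs_sq]; ring
      have hts : γ * t = γ * s ^ 2 := by rw [hs_sq]
      have h5 : s * (s + 1 - s ^ 2) ≤ s * (s * γ) := by
        linarith only [h1', hxb, hst, hts, hs_sq]
      have h6 := le_of_mul_le_mul_left h5 hs_pos
      linarith only [h6, hs_sq]
    have hz : (0:ℝ) ≤ (γ - 7) / 3 := by linarith
    have hcube : (1 + (γ - 7) / 3) ^ 3 ≤ Real.exp (γ - 7) := by
      have h := Real.add_one_le_exp ((γ - 7) / 3)
      have h3 : Real.exp ((γ - 7) / 3) ^ 3 = Real.exp (γ - 7) := by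
        rw [← Real.exp_nat_mul]; congr 1; push_cast; ring
      calc (1 + (γ - 7) / 3) ^ 3 ≤ Real.exp ((γ - 7) / 3) ^ 3 :=
            pow_le_pow_left₀ (by linarith) (by linarith) 3
        _ = Real.exp (γ - 7) := h3
    have hexpγ : 403 * (1 + (γ - 7) / 3) ^ 3 < Real.exp (γ - 1) := by
      have hsplit : Real.exp (γ - 1) = Real.exp 6 * Real.exp (γ - 7) := by
        rw [← Real.exp_add]; ring_nf
      have hep : (0:ℝ) < Real.exp (γ - 7) := Real.exp_pos _
      have hc3 : (0:ℝ) < (1 + (γ - 7) / 3) ^ 3 := by positivity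
      calc 403 * (1 + (γ - 7) / 3) ^ 3 ≤ 403 * Real.exp (γ - 7) := by linarith only [hcube]
        _ < Real.exp 6 * Real.exp (γ - 7) := by nlinarith only [e6, hep]
        _ = Real.exp (γ - 1) := hsplit.symm
    have hpoly : γ * (γ - 1) ^ 2 ≤ (2/3) * (403 * (1 + (γ - 7) / 3) ^ 3) := by
      have hw : (0:ℝ) ≤ γ - 7 := by linarith
      have hw2 : (0:ℝ) ≤ (γ - 7) ^ 2 := sq_nonneg _
      have hw3 : (0:ℝ) ≤ (γ - 7) ^ 3 := pow_nonneg hw 3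
      linarith only [hw, hw2, hw3]
    have ht_bound : t * (γ - 1) ^ 2 ≤ 2/3 := by
      have hp : (0:ℝ) < Real.exp (γ - 1) := Real.exp_pos _
      have hfγ_eq : t = γ * (Real.exp (γ - 1))⁻¹ := by
        rw [htdef]
        unfold fLD
        rw [show ((1:ℝ) - γ) = -(γ - 1) by ring, Real.exp_neg]
      rw [hfγ_eq, show γ * (Real.exp (γ - 1))⁻¹ * (γ - 1) ^ 2
          = (γ * (γ - 1) ^ 2) / Real.exp (γ - 1) by ring]
      rw [div_le_iff₀ hp]
      linarith only [hpoly, hexpγ]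
    have hsq : (1 - t) ^ 2 ≤ t * (γ - 1) ^ 2 := by
      have h1t : (0:ℝ) ≤ 1 - t := by nlinarith only [ht_le, hx0, hx1]
      nlinarith only [mul_self_le_mul_self h1t hkey, hs_sq]
    nlinarith only [hT, ht_pos, hsq, ht_bound]

  -- iteration 0
  have hfA0 : fLD γ < fLD 3.5 := fLD_anti (by norm_num) hγmem1 hgL0
  have hfB0 : fLD 7 < fLD γ := fLD_anti hγmem1 (by norm_num) hgU0
  have hxL0 : (0.385:ℝ) < x := by
    have h : fLD 0.385 < fLD x := by linarith only [fact_f_lt_0, h2, hfA0]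
    exact (fLD_mono.lt_iff_lt (by norm_num) hxmem).mp h
  have hxU0 : x < (0.825:ℝ) := by
    have h : fLD x < fLD 0.825 := by linarith only [fact_f_gt_0, h2, hfB0]
    exact (fLD_mono.lt_iff_lt hxmem (by norm_num)).mp h
  have huA0 : uLD 0.385 < uLD x := uLD_mono (by norm_num) hxmem2 hxL0
  have huB0 : uLD x < uLD 0.825 := uLD_mono hxmem2 (by norm_num) hxU0
  have hgL1 : (4.18:ℝ) < γ := by
    have h : uLD γ < uLD 4.18 := by linarith only [fact_u_gt_0, hu, huA0]
    exact (uLD_anti.lt_iff_gt hγmem2 (by norm_num)).mp h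
  have hgU1 : γ < (6.37:ℝ) := by
    have h : uLD 6.37 < uLD γ := by linarith only [fact_u_lt_0, hu, huB0]
    exact (uLD_anti.lt_iff_gt (by norm_num) hγmem2).mp h
  -- iteration 1
  have hfA1 : fLD γ < fLD 4.18 := fLD_anti (by norm_num) hγmem1 hgL1
  have hfB1 : fLD 6.37 < fLD γ := fLD_anti hγmem1 (by norm_num) hgU1
  have hxL1 : (0.502:ℝ) < x := by
    have h : fLD 0.502 < fLD x := by linarith only [fact_f_lt_1, h2, hfA1]
    exact (fLD_mono.lt_iff_lt (by norm_num) hxmem).mp h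
  have hxU1 : x < (0.775:ℝ) := by
    have h : fLD x < fLD 0.775 := by linarith only [fact_f_gt_1, h2, hfB1]
    exact (fLD_mono.lt_iff_lt hxmem (by norm_num)).mp h
  have huA1 : uLD 0.502 < uLD x := uLD_mono (by norm_num) hxmem2 hxL1
  have huB1 : uLD x < uLD 0.775 := uLD_mono hxmem2 (by norm_num) hxU1
  have hgL2 : (4.57:ℝ) < γ := by
    have h : uLD γ < uLD 4.57 := by linarith only [fact_u_gt_1, hu, huA1]
    exact (uLD_anti.lt_iff_gt hγmem2 (by norm_num)).mp h
  have hgU2 : γ < (5.97:ℝ) := by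
    have h : uLD 5.97 < uLD γ := by linarith only [fact_u_lt_1, hu, huB1]
    exact (uLD_anti.lt_iff_gt (by norm_num) hγmem2).mp h
  -- iteration 2
  have hfA2 : fLD γ < fLD 4.57 := fLD_anti (by norm_num) hγmem1 hgL2
  have hfB2 : fLD 5.97 < fLD γ := fLD_anti hγmem1 (by norm_num) hgU2
  have hxL2 : (0.562:ℝ) < x := by
    have h : fLD 0.562 < fLD x := by linarith only [fact_f_lt_2, h2, hfA2]
    exact (fLD_mono.lt_iff_lt (by norm_num) hxmem).mp h
  have hxU2 : x < (0.737:ℝ) := by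
    have h : fLD x < fLD 0.737 := by linarith only [fact_f_gt_2, h2, hfB2]
    exact (fLD_mono.lt_iff_lt hxmem (by norm_num)).mp h
  have huA2 : uLD 0.562 < uLD x := uLD_mono (by norm_num) hxmem2 hxL2
  have huB2 : uLD x < uLD 0.737 := uLD_mono hxmem2 (by norm_num) hxU2
  have hgL3 : (4.81:ℝ) < γ := by
    have h : uLD γ < uLD 4.81 := by linarith only [fact_u_gt_2, hu, huA2]
    exact (uLD_anti.lt_iff_gt hγmem2 (by norm_num)).mp h
  have hgU3 : γ < (5.72:ℝ) := by
    have h : uLD 5.72 < uLD γ := by linarith only [fact_u_lt_2, hu, huB2]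
    exact (uLD_anti.lt_iff_gt (by norm_num) hγmem2).mp h
  -- iteration 3
  have hfA3 : fLD γ < fLD 4.81 := fLD_anti (by norm_num) hγmem1 hgL3
  have hfB3 : fLD 5.72 < fLD γ := fLD_anti hγmem1 (by norm_num) hgU3
  have hxL3 : (0.597:ℝ) < x := by
    have h : fLD 0.597 < fLD x := by linarith only [fact_f_lt_3, h2, hfA3]
    exact (fLD_mono.lt_iff_lt (by norm_num) hxmem).mp h
  have hxU3 : x < (0.711:ℝ) := by
    have h : fLD x < fLD 0.711 := by linarith only [fact_f_gt_3, h2, hfB3]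
    exact (fLD_mono.lt_iff_lt hxmem (by norm_num)).mp h
  have huA3 : uLD 0.597 < uLD x := uLD_mono (by norm_num) hxmem2 hxL3
  have huB3 : uLD x < uLD 0.711 := uLD_mono hxmem2 (by norm_num) hxU3
  have hgL4 : (4.96:ℝ) < γ := by
    have h : uLD γ < uLD 4.96 := by linarith only [fact_u_gt_3, hu, huA3]
    exact (uLD_anti.lt_iff_gt hγmem2 (by norm_num)).mp h
  have hgU4 : γ < (5.56:ℝ) := by
    have h : uLD 5.56 < uLD γ := by linarith only [fact_u_lt_3, hu, huB3]
    exact (uLD_anti.lt_iff_gt (by norm_num) hγmem2).mp h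
  -- iteration 4
  have hfA4 : fLD γ < fLD 4.96 := fLD_anti (by norm_num) hγmem1 hgL4
  have hfB4 : fLD 5.56 < fLD γ := fLD_anti hγmem1 (by norm_num) hgU4
  have hxL4 : (0.617:ℝ) < x := by
    have h : fLD 0.617 < fLD x := by linarith only [fact_f_lt_4, h2, hfA4]
    exact (fLD_mono.lt_iff_lt (by norm_num) hxmem).mp h
  have hxU4 : x < (0.693:ℝ) := by
    have h : fLD x < fLD 0.693 := by linarith only [fact_f_gt_4, h2, hfB4]
    exact (fLD_mono.lt_iff_lt hxmem (by norm_num)).mp h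
  have huA4 : uLD 0.617 < uLD x := uLD_mono (by norm_num) hxmem2 hxL4
  have huB4 : uLD x < uLD 0.693 := uLD_mono hxmem2 (by norm_num) hxU4
  have hgL5 : (5.05:ℝ) < γ := by
    have h : uLD γ < uLD 5.05 := by linarith only [fact_u_gt_4, hu, huA4]
    exact (uLD_anti.lt_iff_gt hγmem2 (by norm_num)).mp h
  have hgU5 : γ < (5.45:ℝ) := by
    have h : uLD 5.45 < uLD γ := by linarith only [fact_u_lt_4, hu, huB4]
    exact (uLD_anti.lt_iff_gt (by norm_num) hγmem2).mp h
  -- iteration 5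
  have hfA5 : fLD γ < fLD 5.05 := fLD_anti (by norm_num) hγmem1 hgL5
  have hfB5 : fLD 5.45 < fLD γ := fLD_anti hγmem1 (by norm_num) hgU5
  have hxL5 : (0.629:ℝ) < x := by
    have h : fLD 0.629 < fLD x := by linarith only [fact_f_lt_5, h2, hfA5]
    exact (fLD_mono.lt_iff_lt (by norm_num) hxmem).mp h
  have hxU5 : x < (0.68:ℝ) := by
    have h : fLD x < fLD 0.68 := by linarith only [fact_f_gt_5, h2, hfB5]
    exact (fLD_mono.lt_iff_lt hxmem (by norm_num)).mp h
  have huA5 : uLD 0.629 < uLD x := uLD_mono (by norm_num) hxmem2 hxL5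
  have huB5 : uLD x < uLD 0.68 := uLD_mono hxmem2 (by norm_num) hxU5
  have hgL6 : (5.11:ℝ) < γ := by
    have h : uLD γ < uLD 5.11 := by linarith only [fact_u_gt_5, hu, huA5]
    exact (uLD_anti.lt_iff_gt hγmem2 (by norm_num)).mp h
  have hgU6 : γ < (5.38:ℝ) := by
    have h : uLD 5.38 < uLD γ := by linarith only [fact_u_lt_5, hu, huB5]
    exact (uLD_anti.lt_iff_gt (by norm_num) hγmem2).mp h
  -- iteration 6
  have hfA6 : fLD γ < fLD 5.11 := fLD_anti (by norm_num) hγmem1 hgL6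
  have hfB6 : fLD 5.38 < fLD γ := fLD_anti hγmem1 (by norm_num) hgU6
  have hxL6 : (0.637:ℝ) < x := by
    have h : fLD 0.637 < fLD x := by linarith only [fact_f_lt_6, h2, hfA6]
    exact (fLD_mono.lt_iff_lt (by norm_num) hxmem).mp h
  have hxU6 : x < (0.672:ℝ) := by
    have h : fLD x < fLD 0.672 := by linarith only [fact_f_gt_6, h2, hfB6]
    exact (fLD_mono.lt_iff_lt hxmem (by norm_num)).mp h
  have huA6 : uLD 0.637 < uLD x := uLD_mono (by norm_num) hxmem2 hxL6
  have huB6 : uLD x < uLD 0.672 := uLD_mono hxmem2 (by norm_num) hxU6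
  have hgL7 : (5.15:ℝ) < γ := by
    have h : uLD γ < uLD 5.15 := by linarith only [fact_u_gt_6, hu, huA6]
    exact (uLD_anti.lt_iff_gt hγmem2 (by norm_num)).mp h
  have hgU7 : γ < (5.34:ℝ) := by
    have h : uLD 5.34 < uLD γ := by linarith only [fact_u_lt_6, hu, huB6]
    exact (uLD_anti.lt_iff_gt (by norm_num) hγmem2).mp h
  constructor
  · have hax : α * x = 1 := by
      rw [hxdef]; field_simp
    have hgx : α * γ * x = γ := by
      calc α * γ * x = (α * x) * γ := by ring
        _ = γ := by rw [hax]; ring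
    nlinarith only [hgx, hx0, hxU6, hgL7, hα0, hγ]
  · have hax : α * x = 1 := by
      rw [hxdef]; field_simp
    have hgx : α * γ * x = γ := by
      calc α * γ * x = (α * x) * γ := by ring
        _ = γ := by rw [hax]; ring
    nlinarith only [hgx, hx0, hxL6, hgU7, hα0, hγ]
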